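/- For each integer n ≥ 3, let κ2(n) = μ0(2,n,n) − μ0(1,n,n)² be the second cumulant associated with the moment sequence q ↦ μ0(q,n,n). Then lim_{n→∞} ( n²·κ2(n) − e²·(γ + ln n) ) = 0, where γ is the Euler–Mascheroni constant. -/

import Mathlib

open Finset Filter Topology

/-- Exact `p`-th moment of the GLRT statistic under `H₀`. -/
noncomputable def mu0 (p n m : ℕ) : ℝ :=
  Real.Gamma ((m : ℝ) * n) / ((n : ℝ) ^ p * Real.Gamma ((m : ℝ) * n - p)) *
    ∏ j ∈ Finset.range n,
      Real.Gamma ((m : ℝ) - n + 1 - p / n + j) / Real.Gamma ((m : ℝ) - n + 1 + j)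

namespace SCproof

/-- `gg t = -log(1-t) - t` -/
noncomputable def gg (t : ℝ) : ℝ := -Real.log (1 - t) - t

/-- `hh t = 2 log(1-t) - log(1-2t)` -/
noncomputable def hh (t : ℝ) : ℝ := 2 * Real.log (1 - t) - Real.log (1 - 2 * t)

lemma neg_log_one_sub_ge {t : ℝ} (ht1 : t < 1) : t ≤ -Real.log (1 - t) := by
  have h := Real.log_le_sub_one_of_pos (x := 1 - t) (by linarith)
  linarith

lemma neg_log_one_sub_le {t : ℝ} (ht : 0 ≤ t) (ht1 : t < 1) :
    -Real.log (1 - t) ≤ t / (1 - t) := by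
  have h1t : (0:ℝ) < 1 - t := by linarith
  have h := Real.log_le_sub_one_of_pos (x := (1 - t)⁻¹) (by positivity)
  rw [Real.log_inv] at h
  have : (1 - t)⁻¹ - 1 = t / (1 - t) := by field_simp; ring
  linarith [this ▸ h]

lemma gg_nonneg {t : ℝ} (ht1 : t < 1) : 0 ≤ gg t := by
  have := neg_log_one_sub_ge ht1; simp only [gg]; linarith

lemma gg_le {t : ℝ} (ht : 0 ≤ t) (ht1 : t < 1) : gg t ≤ t ^ 2 / (1 - t) := by
  have h1t : (0:ℝ) < 1 - t := by linarith
  have h := neg_log_one_sub_le ht ht1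
  have : t / (1 - t) - t = t ^ 2 / (1 - t) := by field_simp; ring
  simp only [gg]; linarith

lemma gg_le' {t : ℝ} (ht : 0 ≤ t) (ht1 : t ≤ 1/3) : gg t ≤ (3/2) * t ^ 2 := by
  have h1t : (2:ℝ)/3 ≤ 1 - t := by linarith
  have h := gg_le ht (by linarith)
  have : t ^ 2 / (1 - t) ≤ (3/2) * t^2 := by
    rw [div_le_iff₀ (by linarith)]
    nlinarith [sq_nonneg t]
  linarith

lemma hh_eq {t : ℝ} (ht2 : 2 * t < 1) :
    hh t = -Real.log (1 - t^2 / (1-t)^2) := by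
  have h1 : (0:ℝ) < 1 - t := by linarith
  have h2 : (0:ℝ) < 1 - 2*t := by linarith
  have key : 1 - t^2/(1-t)^2 = (1 - 2*t) / (1-t)^2 := by
    field_simp; ring
  rw [hh, key, Real.log_div h2.ne' (by positivity), Real.log_pow]
  push_cast; ring

lemma hh_ge {t : ℝ} (ht : 0 ≤ t) (ht2 : 2 * t < 1) : t ^ 2 ≤ hh t := by
  have h1 : (0:ℝ) < 1 - t := by linarith
  set s : ℝ := t^2 / (1-t)^2 with hs
  have hs0 : 0 ≤ s := by positivity
  have hs1 : s < 1 := by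
    rw [hs, div_lt_one (by positivity)]; nlinarith
  have hst : t^2 ≤ s := by
    rw [hs, le_div_iff₀ (by positivity)]
    nlinarith [sq_nonneg t, sq_nonneg (t*t)]
  rw [hh_eq ht2]
  calc t^2 ≤ s := hst
    _ ≤ -Real.log (1 - s) := neg_log_one_sub_ge hs1

lemma hh_le {t : ℝ} (ht : 0 ≤ t) (ht3 : t ≤ 1/3) : hh t ≤ t ^ 2 + 6 * t ^ 3 := by
  have h1 : (0:ℝ) < 1 - t := by linarith
  have h2 : (0:ℝ) < 1 - 2*t := by linarith
  set s : ℝ := t^2 / (1-t)^2 with hs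
  have hs0 : 0 ≤ s := by positivity
  have hs1 : s < 1 := by
    rw [hs, div_lt_one (by positivity)]; nlinarith
  have key : -Real.log (1 - s) ≤ s / (1 - s) := neg_log_one_sub_le hs0 hs1
  have hsv : s / (1 - s) = t^2 / (1 - 2*t) := by
    rw [hs]
    have : 1 - t^2/(1-t)^2 = (1 - 2*t) / (1-t)^2 := by field_simp; ring
    rw [this]
    field_simp
  have : t^2 / (1 - 2*t) ≤ t^2 + 6*t^3 := by
    rw [div_le_iff₀ h2]
    nlinarith [sq_nonneg t, pow_nonneg ht 3]
  rw [hh_eq (by linarith)]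
  linarith [hsv ▸ key]

lemma hh_nonneg {t : ℝ} (ht : 0 ≤ t) (ht2 : 2 * t < 1) : 0 ≤ hh t :=
  le_trans (by positivity) (hh_ge ht ht2)



lemma summable_shift_sq : Summable (fun k : ℕ => 1 / ((k:ℝ)+1)^2) := by
  have := (Real.summable_one_div_nat_pow (p := 2)).mpr one_lt_two
  have h2 := (summable_nat_add_iff 1).mpr this
  simpa using h2

lemma div_succ_le_self {x : ℝ} (hx0 : 0 ≤ x) (k : ℕ) : x / ((k:ℝ)+1) ≤ x :=
  div_le_self hx0 (by simp)

lemma summable_gg {x : ℝ} (hx0 : 0 ≤ x) (hx1 : x < 1) :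
    Summable (fun k : ℕ => gg (x / (k+1))) := by
  apply Summable.of_nonneg_of_le
    (fun k => gg_nonneg (lt_of_le_of_lt (div_succ_le_self hx0 k) hx1))
    (fun k => ?_) ((summable_shift_sq).mul_left (x^2 / (1-x)))
  have hk1 : (0:ℝ) < (k:ℝ)+1 := by positivity
  have ht0 : 0 ≤ x / ((k:ℝ)+1) := by positivity
  have htx : x / ((k:ℝ)+1) ≤ x := div_succ_le_self hx0 k
  have ht1 : x / ((k:ℝ)+1) < 1 := lt_of_le_of_lt htx hx1
  calc gg (x/((k:ℝ)+1)) ≤ (x/((k:ℝ)+1))^2 / (1 - x/((k:ℝ)+1)) := gg_le ht0 ht1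
    _ ≤ (x/((k:ℝ)+1))^2 / (1 - x) := by
        apply div_le_div_of_nonneg_left (by positivity) (by linarith) (by linarith)
    _ = x^2 / (1-x) * (1 / ((k:ℝ)+1)^2) := by
        rw [div_pow]; field_simp

lemma tendsto_log_succ_sub : Tendsto (fun n : ℕ => Real.log ((n:ℝ)+1) - Real.log n)
    atTop (𝓝 0) := by
  have h := Real.tendsto_harmonic_sub_log_add_one.sub Real.tendsto_harmonic_sub_log
  simp only [sub_self] at h
  have : ∀ n : ℕ, (harmonic n : ℝ) - Real.log ((n:ℝ)+1) - ((harmonic n : ℝ) - Real.log n)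
      = -(Real.log ((n:ℝ)+1) - Real.log n) := fun n => by ring
  simp only [this] at h
  simpa using h.neg

lemma harmonic_real (n : ℕ) : (harmonic n : ℝ) = ∑ i ∈ range n, 1/((i:ℝ)+1) := by
  rw [harmonic]; push_cast; simp [one_div]

lemma logGamma_series {x : ℝ} (hx0 : 0 < x) (hx1 : x < 1) :
    Real.log (Real.Gamma (1 - x)) =
      Real.eulerMascheroniConstant * x + ∑' k : ℕ, gg (x / (k+1)) := by
  have hG : 0 < Real.Gamma (1 - x) := Real.Gamma_pos_of_pos (by linarith)
  have hL : Tendsto (fun N => Real.log (Real.GammaSeq (1-x) N)) atTop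
      (𝓝 (Real.log (Real.Gamma (1-x)))) :=
    ((Real.continuousAt_log hG.ne').tendsto).comp (Real.GammaSeq_tendsto_Gamma (1-x))
  have key : ∀ N : ℕ, 1 ≤ N →
      Real.log (Real.GammaSeq (1-x) N) =
        x * ((harmonic (N+1) : ℝ) - Real.log N)
          + (Real.log N - Real.log ((N:ℝ)+1))
          + ∑ k ∈ range (N+1), gg (x/(k+1)) := by
    intro N hN
    have hNpos : (0:ℝ) < N := by exact_mod_cast hN
    have hfac : (0:ℝ) < (Nat.factorial N : ℝ) := by exact_mod_cast N.factorial_pos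
    have hterm : ∀ j : ℕ, (0:ℝ) < 1 - x + j := fun j => by
      have : (0:ℝ) ≤ j := j.cast_nonneg; linarith
    have hprod : (0:ℝ) < ∏ j ∈ range (N+1), (1 - x + j) :=
      Finset.prod_pos fun j _ => hterm j
    rw [Real.GammaSeq, Real.log_div (by positivity) hprod.ne',
      Real.log_mul (by positivity) hfac.ne', Real.log_rpow hNpos,
      Real.log_prod (fun j _ => (hterm j).ne')]
    have hsplit : ∀ j : ℕ, Real.log (1 - x + j)
        = Real.log ((j:ℝ)+1) + (-(x/((j:ℝ)+1)) - gg (x/((j:ℝ)+1))) := by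
      intro j
      have hj1 : (0:ℝ) < (j:ℝ)+1 := by positivity
      have hsub : (0:ℝ) < 1 - x/((j:ℝ)+1) :=
        sub_pos.mpr (lt_of_le_of_lt (div_succ_le_self hx0.le j) hx1)
      have heq : 1 - x + (j:ℝ) = ((j:ℝ)+1) * (1 - x/((j:ℝ)+1)) := by field_simp; ring
      rw [heq, Real.log_mul hj1.ne' hsub.ne', gg]
      ring
    rw [Finset.sum_congr rfl (fun j _ => hsplit j), Finset.sum_add_distrib,
      Finset.sum_sub_distrib]
    have h1 : ∑ j ∈ range (N+1), Real.log ((j:ℝ)+1) = Real.log (Nat.factorial (N+1) : ℝ) := by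
      rw [← Real.log_prod (fun j _ => by positivity)]
      congr 1
      rw [show (Nat.factorial (N+1) : ℝ) = ((∏ j ∈ range (N+1), (j+1) : ℕ) : ℝ) by
        rw [Finset.prod_range_add_one_eq_factorial]]
      push_cast
      rfl
    have h2 : ∑ j ∈ range (N+1), x/((j:ℝ)+1) = x * (harmonic (N+1) : ℝ) := by
      rw [harmonic_real, Finset.mul_sum]
      exact Finset.sum_congr rfl fun j _ => by rw [mul_one_div]
    have h3 : Real.log (Nat.factorial (N+1) : ℝ)
        = Real.log ((N:ℝ)+1) + Real.log (Nat.factorial N : ℝ) := by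
      rw [Nat.factorial_succ, Nat.cast_mul, Real.log_mul (by positivity) hfac.ne']
      push_cast; ring
    rw [Finset.sum_neg_distrib, h1, h2, h3, sub_mul, one_mul]
    ring
  have hR : Tendsto (fun N : ℕ =>
      x * ((harmonic (N+1) : ℝ) - Real.log N)
        + (Real.log N - Real.log ((N:ℝ)+1))
        + ∑ k ∈ range (N+1), gg (x/(k+1))) atTop
      (𝓝 (Real.eulerMascheroniConstant * x + ∑' k : ℕ, gg (x / (k+1)))) := by
    have t1 : Tendsto (fun N : ℕ => (harmonic (N+1) : ℝ) - Real.log N) atTop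
        (𝓝 Real.eulerMascheroniConstant) := by
      have a1 : Tendsto (fun N : ℕ => (harmonic (N+1) : ℝ) - Real.log ((N:ℝ)+1)) atTop
          (𝓝 Real.eulerMascheroniConstant) := by
        have := Real.tendsto_harmonic_sub_log.comp (tendsto_add_atTop_nat 1)
        simpa [Function.comp_def] using this
      have := a1.add tendsto_log_succ_sub
      simpa using this
    have t2 : Tendsto (fun N : ℕ => Real.log N - Real.log ((N:ℝ)+1)) atTop (𝓝 0) := by
      simpa using tendsto_log_succ_sub.neg
    have t3 : Tendsto (fun N : ℕ => ∑ k ∈ range (N+1), gg (x/(k+1))) atTop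
        (𝓝 (∑' k : ℕ, gg (x / (k+1)))) := by
      have := (summable_gg hx0.le hx1).hasSum.tendsto_sum_nat
      exact this.comp (tendsto_add_atTop_nat 1)
    have := ((t1.const_mul x).add t2).add t3
    simpa [mul_comm] using this
  refine tendsto_nhds_unique (hL.congr' ?_) hR
  filter_upwards [eventually_ge_atTop 1] with N hN
  exact key N hN


lemma sum_telescope_frac {c : ℝ} (hc : 0 < c) (N : ℕ) :
    ∑ j ∈ range N, 1/(((j:ℝ)+c)*((j:ℝ)+c+1)) = 1/c - 1/((N:ℝ)+c) := by
  induction N with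
  | zero => simp
  | succ N ih =>
    rw [Finset.sum_range_succ, ih]
    have h1 : (0:ℝ) < (N:ℝ) + c := by positivity
    have h2 : (0:ℝ) < (N:ℝ) + c + 1 := by positivity
    push_cast
    field_simp
    ring

lemma hasSum_telescope {c : ℝ} (hc : 0 < c) :
    HasSum (fun j : ℕ => 1/(((j:ℝ)+c)*((j:ℝ)+c+1))) (1/c) := by
  have hnn : ∀ j : ℕ, 0 ≤ 1/(((j:ℝ)+c)*((j:ℝ)+c+1)) := fun j => by positivity
  rw [hasSum_iff_tendsto_nat_of_nonneg hnn]
  have : (fun N : ℕ => ∑ j ∈ range N, 1/(((j:ℝ)+c)*((j:ℝ)+c+1)))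
      = fun N : ℕ => 1/c - 1/((N:ℝ)+c) := funext fun N => sum_telescope_frac hc N
  rw [this]
  have : Tendsto (fun N : ℕ => 1/((N:ℝ)+c)) atTop (𝓝 0) := by
    have h := tendsto_atTop_add_const_right atTop c
      (tendsto_natCast_atTop_atTop : Tendsto (fun n : ℕ => (n:ℝ)) atTop atTop)
    simp only [one_div]; exact h.inv_tendsto_atTop
  simpa using tendsto_const_nhds.sub this

lemma summable_shift_sq' (c : ℝ) (hc : 0 < c) : Summable (fun j : ℕ => 1/(((j:ℝ)+c)^2)) := by
  apply Summable.of_nonneg_of_le (fun j => by positivity) (fun j => ?_)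
    ((hasSum_telescope hc).summable.mul_left ((c+1)/c))
  have h1 : (0:ℝ) < (j:ℝ) + c := by positivity
  rw [mul_one_div, div_le_div_iff₀ (by positivity) (by positivity),
    div_mul_eq_mul_div, le_div_iff₀ hc]
  have hj : (0:ℝ) ≤ (j:ℝ) := j.cast_nonneg
  nlinarith

/-- tail bound: `1/n ≤ ∑'_j 1/(j+n)² ≤ 1/(n-1)` for `n ≥ 2`. -/
lemma tail_sq_bounds {n : ℕ} (hn : 2 ≤ n) :
    1/(n:ℝ) ≤ (∑' j : ℕ, 1/(((j:ℝ)+n)^2)) ∧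
      (∑' j : ℕ, 1/(((j:ℝ)+n)^2)) ≤ 1/((n:ℝ)-1) := by
  have hn0 : (0:ℝ) < n := by positivity
  have hn1 : (0:ℝ) < (n:ℝ) - 1 := by
    have : (2:ℝ) ≤ n := by exact_mod_cast hn
    linarith
  have hsum := summable_shift_sq' (n:ℝ) hn0
  constructor
  · rw [← (hasSum_telescope hn0).tsum_eq]
    apply Summable.tsum_le_tsum (fun j => ?_) (hasSum_telescope hn0).summable hsum
    have h1 : (0:ℝ) < (j:ℝ) + n := by positivity
    rw [div_le_div_iff₀ (by positivity) (by positivity)]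
    nlinarith
  · rw [← (hasSum_telescope hn1).tsum_eq]
    apply Summable.tsum_le_tsum (fun j => ?_) hsum (hasSum_telescope hn1).summable
    have h1 : (0:ℝ) < (j:ℝ) + n := by positivity
    have heq : (j:ℝ) + ((n:ℝ)-1) + 1 = (j:ℝ) + n := by ring
    rw [heq, div_le_div_iff₀ (by positivity) (by positivity)]
    nlinarith

lemma zeta2_le_two : (∑' k : ℕ, 1/(((k:ℝ)+1)^2)) ≤ 2 := by
  have h1 := hasSum_telescope (c := 1) one_pos
  have hsum := summable_shift_sq' 1 one_pos
  calc (∑' k : ℕ, 1/(((k:ℝ)+1)^2)) ≤ ∑' k : ℕ, 2 * (1/(((k:ℝ)+1)*((k:ℝ)+1+1))) := by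
        apply Summable.tsum_le_tsum (fun k => ?_) hsum (h1.summable.mul_left 2)
        have h2 : (0:ℝ) < (k:ℝ) + 1 := by positivity
        rw [mul_one_div, div_le_div_iff₀ (by positivity) (by positivity)]
        nlinarith
    _ = 2 * (1/1) := by rw [tsum_mul_left, h1.tsum_eq]
    _ = 2 := by norm_num



/-- key combination: `n·∑'f − ∑_{k<n-1}(n-k-1)·f k = ∑' min(k+1,n)·f k` for nonneg summable f -/
lemma tsum_min_combination {f : ℕ → ℝ} (hf : Summable f) (n : ℕ) :
    (n:ℝ) * ∑' k, f k - ∑ k ∈ range (n-1), ((n:ℝ)-(k:ℝ)-1) * f k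
      = ∑' k, (min (k+1) n : ℕ) * f k := by
  have hFs : Summable (fun k => (if k < n-1 then ((n:ℝ)-(k:ℝ)-1) * f k else 0)) := by
    apply summable_of_finite_support
    apply Set.Finite.subset (Set.finite_Iio (n-1))
    intro k hk
    simp only [Function.mem_support] at hk
    by_contra hc
    simp only [Set.mem_Iio, not_lt] at hc
    exact hk (by simp [Nat.not_lt.mpr hc, if_neg])
  have hsum_eq : ∑ k ∈ range (n-1), ((n:ℝ)-(k:ℝ)-1) * f k
      = ∑' k, (if k < n-1 then ((n:ℝ)-(k:ℝ)-1) * f k else 0) := by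
    rw [tsum_eq_sum (s := range (n-1))]
    · exact Finset.sum_congr rfl fun k hk => by
        rw [if_pos (Finset.mem_range.mp hk)]
    · intro k hk
      rw [if_neg (fun h => hk (Finset.mem_range.mpr h))]
  rw [hsum_eq, ← tsum_mul_left, ← Summable.tsum_sub (hf.mul_left _) hFs]
  apply tsum_congr
  intro k
  by_cases hk : k < n-1
  · rw [if_pos hk]
    have : min (k+1) n = k+1 := by omega
    rw [this]
    push_cast
    ring
  · rw [if_neg hk]
    have : min (k+1) n = n := by omega
    rw [this]
    ring

/-- split of the main sum -/
lemma main_sum_split {n : ℕ} (hn : 2 ≤ n) :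
    (∑' k : ℕ, ((min (k+1) n : ℕ) : ℝ) / ((k:ℝ)+1)^2)
      = (harmonic (n-1) : ℝ) + (n:ℝ) * ∑' j : ℕ, 1/(((j:ℝ)+n)^2) := by
  have hsum : Summable (fun k : ℕ => ((min (k+1) n : ℕ) : ℝ) / ((k:ℝ)+1)^2) := by
    apply Summable.of_nonneg_of_le (fun k => by positivity) (fun k => ?_)
      (summable_shift_sq.mul_left (n:ℝ))
    rw [mul_one_div]
    apply div_le_div_of_nonneg_right ?_ (by positivity)
    exact_mod_cast Nat.cast_le.mpr (min_le_right _ _)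
  rw [← Summable.sum_add_tsum_nat_add (f := fun k : ℕ => ((min (k+1) n : ℕ) : ℝ) / ((k:ℝ)+1)^2)
    (n-1) hsum]
  congr 1
  · rw [harmonic_real]
    apply Finset.sum_congr rfl
    intro k hk
    have hk' : k < n - 1 := Finset.mem_range.mp hk
    have hmin : min (k+1) n = k+1 := by omega
    rw [hmin]
    push_cast
    rw [sq]
    have hkpos : ((k:ℝ)+1) ≠ 0 := by positivity
    field_simp
  · rw [← tsum_mul_left]
    apply tsum_congr
    intro j
    have hmin : min (j+(n-1)+1) n = n := by omega
    rw [hmin]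
    have hcast : ((j+(n-1):ℕ):ℝ) + 1 = (j:ℝ) + n := by
      have : (((n-1):ℕ):ℝ) = (n:ℝ) - 1 := by
        rw [Nat.cast_sub (by omega)]; norm_num
      push_cast [this]
      ring
    rw [hcast, mul_one_div]



/-- closed form for the Gamma-ratio product -/
noncomputable def P (n : ℕ) (x : ℝ) : ℝ :=
  Real.Gamma (1 - x) ^ n * ∏ k ∈ range (n-1), (1 - x/(k+1)) ^ (n-(k+1))

lemma Gamma_shift {x : ℝ} (hx : x < 1) (n : ℕ) :
    Real.Gamma (1 - x + n) = Real.Gamma (1 - x) * ∏ k ∈ range n, ((k:ℝ) + 1 - x) := by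
  induction n with
  | zero => simp
  | succ n ih =>
    have hpos : (0:ℝ) < 1 - x + n := by
      have : (0:ℝ) ≤ n := n.cast_nonneg; linarith
    have : (1 : ℝ) - x + (n+1 : ℕ) = (1 - x + n) + 1 := by push_cast; ring
    rw [this, Real.Gamma_add_one hpos.ne', ih, Finset.prod_range_succ]
    push_cast; ring

lemma Gamma_ratio {x : ℝ} (hx : x < 1) (n : ℕ) :
    Real.Gamma (1 - x + n) / Real.Gamma (1 + n)
      = Real.Gamma (1 - x) * ∏ k ∈ range n, (1 - x/(k+1)) := by
  have hfact : Real.Gamma (1 + (n:ℝ)) = ∏ k ∈ range n, ((k:ℝ) + 1) := by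
    rw [add_comm, Real.Gamma_nat_eq_factorial]
    rw [show ((Nat.factorial n : ℕ) : ℝ) = ((∏ k ∈ range n, (k+1) : ℕ) : ℝ) by
      rw [Finset.prod_range_add_one_eq_factorial]]
    push_cast; rfl
  rw [Gamma_shift hx, hfact, mul_div_assoc, ← Finset.prod_div_distrib]
  congr 1
  refine Finset.prod_congr rfl fun k _ => ?_
  have hk : (0:ℝ) < (k:ℝ) + 1 := by positivity
  field_simp

lemma prod_Gamma_eq {x : ℝ} (hx : x < 1) (n : ℕ) :
    ∏ j ∈ range n, Real.Gamma (1 - x + j) / Real.Gamma (1 + j) = P n x := by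
  induction n with
  | zero => simp [P]
  | succ n ih =>
    rw [Finset.prod_range_succ, ih, Gamma_ratio hx]
    unfold P
    rw [show n + 1 - 1 = n from rfl]
    have step : ∏ k ∈ range n, (1 - x/(k+1)) ^ (n+1-(k+1))
        = (∏ k ∈ range (n-1), (1 - x/(k+1)) ^ (n-(k+1))) * ∏ k ∈ range n, (1 - x/(k+1)) := by
      have e1 : ∀ k ∈ range n, (1 - x/((k:ℝ)+1)) ^ (n+1-(k+1))
          = (1 - x/(k+1)) ^ (n-(k+1)) * (1 - x/(k+1)) := by
        intro k hk
        have hk' : k < n := Finset.mem_range.mp hk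
        rw [show n+1-(k+1) = (n-(k+1))+1 by omega, pow_succ]
      rw [Finset.prod_congr rfl e1, Finset.prod_mul_distrib]
      congr 1
      rcases Nat.eq_zero_or_pos n with h0 | h1
      · subst h0; simp
      · rw [show n = (n-1)+1 by omega, Finset.prod_range_succ]
        rw [show (n-1)+1 - ((n-1)+1) = 0 by omega, pow_zero, mul_one]
        congr 1 <;> omega
    rw [step, pow_succ]
    ring

lemma mu0_one_eq {n : ℕ} (hn : 3 ≤ n) :
    mu0 1 n n = ((n:ℝ)^2 - 1) / n * P n (1/n) := by
  have hn0 : (0:ℝ) < n := by positivity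
  have hx : (1:ℝ)/n < 1 := by
    rw [div_lt_one hn0]; exact_mod_cast by omega
  have harg : ∀ j : ℕ, (n:ℝ) - n + 1 - 1/n + j = 1 - 1/n + j := fun j => by ring
  have harg2 : ∀ j : ℕ, (n:ℝ) - n + 1 + j = 1 + j := fun j => by ring
  have hn3 : (3:ℝ) ≤ n := by exact_mod_cast hn
  have hGpos : (0:ℝ) < (n:ℝ)*n - 1 := by nlinarith
  have hratio : Real.Gamma ((n:ℝ)*n) = ((n:ℝ)*n - 1) * Real.Gamma ((n:ℝ)*n - 1) := by
    nth_rewrite 1 [show (n:ℝ)*n = ((n:ℝ)*n - 1) + 1 by ring]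
    rw [Real.Gamma_add_one hGpos.ne']
  have hGne : Real.Gamma ((n:ℝ)*n - 1) ≠ 0 := (Real.Gamma_pos_of_pos hGpos).ne'
  rw [mu0]
  push_cast
  rw [Finset.prod_congr rfl (fun j _ => by rw [harg j, harg2 j]), prod_Gamma_eq hx,
    hratio]
  field_simp
  have hGne' : Real.Gamma ((n:ℝ)^2 - 1) ≠ 0 := by
    rw [show ((n:ℝ)^2 - 1) = (n:ℝ)*n - 1 by ring]; exact hGne
  linear_combination ((n:ℝ)^2 - 1) * P n (1/(n:ℝ)) * mul_inv_cancel₀ hGne'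

lemma mu0_two_eq {n : ℕ} (hn : 3 ≤ n) :
    mu0 2 n n = ((n:ℝ)^2 - 1) * ((n:ℝ)^2 - 2) / (n:ℝ)^2 * P n (2/n) := by
  have hn0 : (0:ℝ) < n := by positivity
  have hn3 : (3:ℝ) ≤ n := by exact_mod_cast hn
  have hx : (2:ℝ)/n < 1 := by
    rw [div_lt_one hn0]; linarith
  have harg : ∀ j : ℕ, (n:ℝ) - n + 1 - 2/n + j = 1 - 2/n + j := fun j => by ring
  have harg2 : ∀ j : ℕ, (n:ℝ) - n + 1 + j = 1 + j := fun j => by ring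
  have hGpos2 : (0:ℝ) < (n:ℝ)*n - 2 := by nlinarith
  have hGpos1 : (0:ℝ) < (n:ℝ)*n - 1 := by nlinarith
  have h21 : Real.Gamma ((n:ℝ)*n - 1) = ((n:ℝ)*n - 2) * Real.Gamma ((n:ℝ)*n - 2) := by
    nth_rewrite 1 [show (n:ℝ)*n - 1 = ((n:ℝ)*n - 2) + 1 by ring]
    rw [Real.Gamma_add_one hGpos2.ne']
  have hratio : Real.Gamma ((n:ℝ)*n) = ((n:ℝ)*n - 1) * (((n:ℝ)*n - 2) *
      Real.Gamma ((n:ℝ)*n - 2)) := by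
    nth_rewrite 1 [show (n:ℝ)*n = ((n:ℝ)*n - 1) + 1 by ring]
    rw [Real.Gamma_add_one hGpos1.ne', h21]
  have hGne : Real.Gamma ((n:ℝ)*n - 2) ≠ 0 := (Real.Gamma_pos_of_pos hGpos2).ne'
  rw [mu0]
  push_cast
  rw [Finset.prod_congr rfl (fun j _ => by rw [harg j, harg2 j]), prod_Gamma_eq hx,
    hratio]
  field_simp
  have hGne' : Real.Gamma ((n:ℝ)^2 - 2) ≠ 0 := by
    rw [show ((n:ℝ)^2 - 2) = (n:ℝ)*n - 2 by ring]; exact hGne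
  linear_combination ((n:ℝ)^4 - 3*(n:ℝ)^2 + 2) * P n (2/(n:ℝ)) * mul_inv_cancel₀ hGne'







-- new material

lemma summable_of_le_sq {f : ℕ → ℝ} {C : ℝ} (h0 : ∀ k, 0 ≤ f k)
    (hb : ∀ k : ℕ, f k ≤ C / ((k:ℝ)+1)^2) : Summable f :=
  Summable.of_nonneg_of_le h0 (fun k => by rw [mul_one_div]; exact hb k)
    (summable_shift_sq.mul_left C)

lemma tsum_le_of_le_sq {f : ℕ → ℝ} {C : ℝ} (hC : 0 ≤ C) (h0 : ∀ k, 0 ≤ f k)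
    (hb : ∀ k : ℕ, f k ≤ C / ((k:ℝ)+1)^2) : (∑' k, f k) ≤ 2 * C := by
  have hs : Summable f := summable_of_le_sq h0 hb
  calc (∑' k, f k) ≤ ∑' k : ℕ, C * (1/((k:ℝ)+1)^2) := by
        apply Summable.tsum_le_tsum (fun k => by rw [mul_one_div]; exact hb k) hs
          (summable_shift_sq.mul_left C)
    _ = C * ∑' k : ℕ, 1/((k:ℝ)+1)^2 := tsum_mul_left
    _ ≤ C * 2 := by
        apply mul_le_mul_of_nonneg_left zeta2_le_two hC
    _ = 2 * C := by ring

lemma log_P {n : ℕ} {x : ℝ} (hx0 : 0 < x) (hx1 : x < 1) :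
    Real.log (P n x) = n * Real.log (Real.Gamma (1-x))
      + ∑ k ∈ range (n-1), ((n:ℝ)-(k:ℝ)-1) * Real.log (1 - x/((k:ℝ)+1)) := by
  have hG : 0 < Real.Gamma (1-x) := Real.Gamma_pos_of_pos (by linarith)
  have hfac : ∀ k : ℕ, (0:ℝ) < 1 - x/((k:ℝ)+1) := fun k => by
    have h1 : (1:ℝ) ≤ (k:ℝ)+1 := by simp
    have : x/((k:ℝ)+1) ≤ x := div_le_self hx0.le h1
    linarith
  have hprod : (0:ℝ) < ∏ k ∈ range (n-1), (1 - x/((k:ℝ)+1)) ^ (n-(k+1)) :=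
    Finset.prod_pos fun k _ => pow_pos (hfac k) _
  rw [P, Real.log_mul (by positivity) hprod.ne', Real.log_pow,
    Real.log_prod (fun k _ => (pow_pos (hfac k) _).ne')]
  congr 1
  apply Finset.sum_congr rfl
  intro k hk
  have hk' : k < n - 1 := Finset.mem_range.mp hk
  rw [Real.log_pow]
  congr 1
  have : ((n - (k+1) : ℕ) : ℝ) = (n:ℝ) - (k:ℝ) - 1 := by
    rw [Nat.cast_sub (by omega)]; push_cast; ring
  rw [this]

/-- expansion of `log (P n (1/n))` -/
lemma a_expand {n : ℕ} (hn : 3 ≤ n) :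
    ∃ Δ : ℝ, 0 ≤ Δ ∧ Δ ≤ 3/n ∧
      Real.log (P n (1/n)) = Real.eulerMascheroniConstant - (harmonic (n-1) : ℝ)
        + 1 - 1/n + Δ := by
  have hn0 : (0:ℝ) < n := by positivity
  have hn3 : (3:ℝ) ≤ n := by exact_mod_cast hn
  set x : ℝ := 1/n with hxdef
  have hx0 : 0 < x := by positivity
  have hx1 : x < 1 := by rw [hxdef, div_lt_one hn0]; linarith
  have ht0 : ∀ k : ℕ, 0 ≤ x/((k:ℝ)+1) := fun k => by positivity
  have ht3 : ∀ k : ℕ, x/((k:ℝ)+1) ≤ 1/3 := fun k => by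
    have h1 : (1:ℝ) ≤ (k:ℝ)+1 := by simp
    calc x/((k:ℝ)+1) ≤ x := div_le_self hx0.le h1
      _ ≤ 1/3 := by rw [hxdef, div_le_div_iff₀ hn0 (by norm_num)]; linarith
  have hsg : Summable (fun k : ℕ => gg (x / (k+1))) := summable_gg hx0.le hx1
  -- the finite sum of t's
  have hfin : ∑ k ∈ range (n-1), ((n:ℝ)-(k:ℝ)-1) * (x/((k:ℝ)+1))
      = (harmonic (n-1) : ℝ) - ((n:ℝ)-1) * x := by
    rw [harmonic_real]
    rw [show ((n:ℝ)-1)*x = ∑ k ∈ range (n-1), x from by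
      rw [Finset.sum_const, card_range, nsmul_eq_mul, Nat.cast_sub (by omega)]; push_cast; ring]
    rw [← Finset.sum_sub_distrib]
    apply Finset.sum_congr rfl
    intro k hk
    have hk1 : ((k:ℝ)+1) ≠ 0 := by positivity
    rw [hxdef]
    field_simp
    ring
  -- rewrite logs
  have hlog1 : ∀ k : ℕ, Real.log (1 - x/((k:ℝ)+1))
      = -(x/((k:ℝ)+1)) - gg (x/((k:ℝ)+1)) := fun k => by rw [gg]; ring
  have hmain := log_P (n := n) hx0 hx1
  rw [logGamma_series hx0 hx1] at hmain
  rw [Finset.sum_congr rfl (fun k _ => by rw [hlog1 k])] at hmain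
  have hsplit : ∑ k ∈ range (n-1), ((n:ℝ)-(k:ℝ)-1) * (-(x/((k:ℝ)+1)) - gg (x/((k:ℝ)+1)))
      = -(∑ k ∈ range (n-1), ((n:ℝ)-(k:ℝ)-1) * (x/((k:ℝ)+1)))
        - ∑ k ∈ range (n-1), ((n:ℝ)-(k:ℝ)-1) * gg (x/((k:ℝ)+1)) := by
    rw [← Finset.sum_neg_distrib, ← Finset.sum_sub_distrib]
    apply Finset.sum_congr rfl
    intro k _
    ring
  rw [hsplit, hfin] at hmain
  refine ⟨∑' k, ((min (k+1) n : ℕ) : ℝ) * gg (x/((k:ℝ)+1)), ?_, ?_, ?_⟩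
  · exact tsum_nonneg fun k => mul_nonneg (by positivity)
      (gg_nonneg (lt_of_le_of_lt (ht3 k) (by norm_num)))
  · have hgoal : (∑' k, ((min (k+1) n : ℕ) : ℝ) * gg (x/((k:ℝ)+1))) ≤ 2 * (3/2 * (1/n)) := by
      apply tsum_le_of_le_sq (C := 3/2 * (1/n)) (by positivity)
        (fun k => mul_nonneg (by positivity) (gg_nonneg (lt_of_le_of_lt (ht3 k) (by norm_num))))
      intro k
      have hb : gg (x/((k:ℝ)+1)) ≤ (3/2) * (x/((k:ℝ)+1))^2 := gg_le' (ht0 k) (ht3 k)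
      have hmin : ((min (k+1) n : ℕ) : ℝ) ≤ n := by exact_mod_cast min_le_right _ _
      have hminnn : (0:ℝ) ≤ ((min (k+1) n : ℕ) : ℝ) := by positivity
      calc ((min (k+1) n : ℕ) : ℝ) * gg (x/((k:ℝ)+1))
          ≤ (n:ℝ) * ((3/2) * (x/((k:ℝ)+1))^2) := by
            apply mul_le_mul hmin hb (gg_nonneg (lt_of_le_of_lt (ht3 k) (by norm_num))) hn0.le
        _ = 3/2 * (1/n) / ((k:ℝ)+1)^2 := by
            rw [hxdef, div_pow]
            field_simp
    calc (∑' k, ((min (k+1) n : ℕ) : ℝ) * gg (x/((k:ℝ)+1))) ≤ 2 * (3/2 * (1/n)) := hgoal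
      _ = 3/(n:ℝ) := by ring
  · rw [hmain, ← tsum_min_combination hsg n]
    rw [hxdef]
    field_simp
    ring

end SCproof

namespace SCproof

lemma gg_two_sub (t : ℝ) : gg (2*t) - 2 * gg t = hh t := by
  unfold gg hh; ring

lemma summable_min_mul {f : ℕ → ℝ} {C : ℝ} (n : ℕ) (h0 : ∀ k, 0 ≤ f k)
    (hb : ∀ k : ℕ, f k ≤ C / ((k:ℝ)+1)^2) :
    Summable (fun k : ℕ => ((min (k+1) n : ℕ) : ℝ) * f k) := by
  apply summable_of_le_sq (C := (n:ℝ) * C)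
    (fun k => mul_nonneg (by positivity) (h0 k))
  intro k
  have hmin : ((min (k+1) n : ℕ) : ℝ) ≤ n := by exact_mod_cast min_le_right _ _
  calc ((min (k+1) n : ℕ) : ℝ) * f k ≤ (n:ℝ) * (C / ((k:ℝ)+1)^2) :=
        mul_le_mul hmin (hb k) (h0 k) (by positivity)
    _ = (n:ℝ) * C / ((k:ℝ)+1)^2 := by ring

/-- expansion of `n² (log P n (2/n) - 2 log P n (1/n))` -/
lemma L_expand {n : ℕ} (hn : 3 ≤ n) :
    0 ≤ (n:ℝ)^2 * (Real.log (P n (2/n)) - 2 * Real.log (P n (1/n)))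
        - ((harmonic (n-1) : ℝ) + 1)
    ∧ (n:ℝ)^2 * (Real.log (P n (2/n)) - 2 * Real.log (P n (1/n)))
        - ((harmonic (n-1) : ℝ) + 1) ≤ 1/((n:ℝ)-1) + 12/n := by
  have hn0 : (0:ℝ) < n := by positivity
  have hn3 : (3:ℝ) ≤ n := by exact_mod_cast hn
  set x : ℝ := 1/n with hxdef
  have hx0 : 0 < x := by positivity
  have hx1 : x < 1 := by rw [hxdef, div_lt_one hn0]; linarith
  have hy0 : (0:ℝ) < 2/n := by positivity
  have hy1 : (2:ℝ)/n < 1 := by rw [div_lt_one hn0]; linarith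
  have hyx : ∀ k : ℕ, (2:ℝ)/n/((k:ℝ)+1) = 2 * (x/((k:ℝ)+1)) := fun k => by
    rw [hxdef]; ring
  have ht0 : ∀ k : ℕ, 0 ≤ x/((k:ℝ)+1) := fun k => by positivity
  have ht3 : ∀ k : ℕ, x/((k:ℝ)+1) ≤ 1/3 := fun k => by
    have h1 : (1:ℝ) ≤ (k:ℝ)+1 := by simp
    calc x/((k:ℝ)+1) ≤ x := div_le_self hx0.le h1
      _ ≤ 1/3 := by rw [hxdef, div_le_div_iff₀ hn0 (by norm_num)]; linarith
  have ht21 : ∀ k : ℕ, 2 * (x/((k:ℝ)+1)) < 1 := fun k => by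
    have := ht3 k; linarith
  have hhh0 : ∀ k : ℕ, 0 ≤ hh (x/((k:ℝ)+1)) := fun k => hh_nonneg (ht0 k) (ht21 k)
  have htsq : ∀ k : ℕ, (x/((k:ℝ)+1))^2 = 1/((n:ℝ)^2*((k:ℝ)+1)^2) := fun k => by
    rw [hxdef, div_pow, div_pow, one_pow, div_div]
  have hs_gg1 : Summable (fun k : ℕ => gg (x / (k+1))) := summable_gg hx0.le hx1
  have hs_gg2 : Summable (fun k : ℕ => gg ((2:ℝ)/n / (k+1))) := summable_gg hy0.le hy1
  have hhh_le : ∀ k : ℕ, hh (x/((k:ℝ)+1)) ≤ 3 * x^2 / ((k:ℝ)+1)^2 := by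
    intro k
    have h1 := hh_le (ht0 k) (ht3 k)
    have h2 : (x/((k:ℝ)+1))^3 ≤ (x/((k:ℝ)+1))^2 * (1/3) := by
      calc (x/((k:ℝ)+1))^3 = (x/((k:ℝ)+1))^2 * (x/((k:ℝ)+1)) := by ring
        _ ≤ (x/((k:ℝ)+1))^2 * (1/3) := by
            apply mul_le_mul_of_nonneg_left (ht3 k) (by positivity)
    have h3 : (x/((k:ℝ)+1))^2 = x^2/((k:ℝ)+1)^2 := by rw [div_pow]
    have h4 : 3*x^2/((k:ℝ)+1)^2 = 3*(x^2/((k:ℝ)+1)^2) := by ring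
    nlinarith [sq_nonneg (x/((k:ℝ)+1))]
  have hs_hh : Summable (fun k : ℕ => hh (x/((k:ℝ)+1))) :=
    summable_of_le_sq hhh0 hhh_le
  -- Gamma part
  have hGpart : Real.log (Real.Gamma (1 - 2/n)) - 2 * Real.log (Real.Gamma (1 - x))
      = ∑' k : ℕ, hh (x/((k:ℝ)+1)) := by
    rw [logGamma_series hy0 hy1, logGamma_series hx0 hx1]
    have e1 : Real.eulerMascheroniConstant * (2/n)
        + (∑' k : ℕ, gg ((2:ℝ)/n / (k+1)))
        - 2 * (Real.eulerMascheroniConstant * x + ∑' k : ℕ, gg (x / (k+1)))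
        = (∑' k : ℕ, gg ((2:ℝ)/n / (k+1))) - ∑' k : ℕ, 2 * gg (x / (k+1)) := by
      rw [tsum_mul_left, hxdef]
      ring
    rw [e1, ← Summable.tsum_sub hs_gg2 (hs_gg1.mul_left 2)]
    apply tsum_congr
    intro k
    rw [hyx k, gg_two_sub]
  have hfin : ∀ k : ℕ, Real.log (1 - (2:ℝ)/n/((k:ℝ)+1)) - 2 * Real.log (1 - x/((k:ℝ)+1))
      = -hh (x/((k:ℝ)+1)) := fun k => by
    rw [hyx k, hh]; ring
  -- assemble L
  have hL : Real.log (P n (2/n)) - 2 * Real.log (P n x)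
      = ∑' k, ((min (k+1) n : ℕ) : ℝ) * hh (x/((k:ℝ)+1)) := by
    rw [log_P hy0 hy1, log_P hx0 hx1]
    have hS : ∑ k ∈ range (n-1), ((n:ℝ)-(k:ℝ)-1) * Real.log (1 - (2:ℝ)/n/((k:ℝ)+1))
        - 2 * ∑ k ∈ range (n-1), ((n:ℝ)-(k:ℝ)-1) * Real.log (1 - x/((k:ℝ)+1))
        = -∑ k ∈ range (n-1), ((n:ℝ)-(k:ℝ)-1) * hh (x/((k:ℝ)+1)) := by
      rw [Finset.mul_sum, ← Finset.sum_sub_distrib, ← Finset.sum_neg_distrib]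
      apply Finset.sum_congr rfl
      intro k _
      have : ((n:ℝ)-(k:ℝ)-1) * Real.log (1 - (2:ℝ)/n/((k:ℝ)+1))
          - 2 * (((n:ℝ)-(k:ℝ)-1) * Real.log (1 - x/((k:ℝ)+1)))
          = ((n:ℝ)-(k:ℝ)-1) * (Real.log (1 - (2:ℝ)/n/((k:ℝ)+1))
              - 2 * Real.log (1 - x/((k:ℝ)+1))) := by ring
      rw [this, hfin k]
      ring
    have key := tsum_min_combination hs_hh n
    linear_combination (n:ℝ) * hGpart + hS + key
  -- now the bounds
  have hmin_le : ∀ k : ℕ, ((min (k+1) n : ℕ) : ℝ) ≤ (k:ℝ)+1 := fun k => by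
    exact_mod_cast Nat.cast_le.mpr (min_le_left _ _)
  have hmin_len : ∀ k : ℕ, ((min (k+1) n : ℕ) : ℝ) ≤ n := fun k => by
    exact_mod_cast Nat.cast_le.mpr (min_le_right _ _)
  have hmin_pos : ∀ k : ℕ, (0:ℝ) ≤ ((min (k+1) n : ℕ) : ℝ) := fun k => by positivity
  have hs_main : Summable (fun k : ℕ => ((min (k+1) n : ℕ) : ℝ) / ((k:ℝ)+1)^2) := by
    apply summable_of_le_sq (fun k => by positivity)
    intro k
    exact div_le_div_of_nonneg_right (hmin_len k) (by positivity) |>.trans_eq rfl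
  have hs_min_hh : Summable (fun k : ℕ => ((min (k+1) n : ℕ) : ℝ) * hh (x/((k:ℝ)+1))) :=
    summable_min_mul n hhh0 hhh_le
  -- scaled version
  have hmul : (n:ℝ)^2 * (Real.log (P n (2/n)) - 2 * Real.log (P n x))
      = ∑' k, (n:ℝ)^2 * (((min (k+1) n : ℕ) : ℝ) * hh (x/((k:ℝ)+1))) := by
    rw [hL, tsum_mul_left]
  have low : ∀ k : ℕ, ((min (k+1) n : ℕ) : ℝ) / ((k:ℝ)+1)^2
      ≤ (n:ℝ)^2 * (((min (k+1) n : ℕ) : ℝ) * hh (x/((k:ℝ)+1))) := by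
    intro k
    have h1 := hh_ge (ht0 k) (ht21 k)
    have h2 : ((min (k+1) n : ℕ) : ℝ) / ((k:ℝ)+1)^2
        = (n:ℝ)^2 * (((min (k+1) n : ℕ) : ℝ) * (x/((k:ℝ)+1))^2) := by
      rw [htsq k]
      field_simp
    rw [h2]
    apply mul_le_mul_of_nonneg_left ?_ (by positivity)
    exact mul_le_mul_of_nonneg_left h1 (hmin_pos k)
  have upp : ∀ k : ℕ, (n:ℝ)^2 * (((min (k+1) n : ℕ) : ℝ) * hh (x/((k:ℝ)+1)))
      ≤ ((min (k+1) n : ℕ) : ℝ) / ((k:ℝ)+1)^2 + (6/n) * (1/((k:ℝ)+1)^2) := by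
    intro k
    have h1 := hh_le (ht0 k) (ht3 k)
    have hcube : (x/((k:ℝ)+1))^3 = 1/((n:ℝ)^3*((k:ℝ)+1)^3) := by
      rw [hxdef, div_pow, div_pow, one_pow, div_div]
    have step1 : (n:ℝ)^2 * (((min (k+1) n : ℕ) : ℝ) * hh (x/((k:ℝ)+1)))
        ≤ (n:ℝ)^2 * (((min (k+1) n : ℕ) : ℝ) * ((x/((k:ℝ)+1))^2 + 6*(x/((k:ℝ)+1))^3)) := by
      apply mul_le_mul_of_nonneg_left ?_ (by positivity)
      exact mul_le_mul_of_nonneg_left h1 (hmin_pos k)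
    have step2 : (n:ℝ)^2 * (((min (k+1) n : ℕ) : ℝ) * ((x/((k:ℝ)+1))^2 + 6*(x/((k:ℝ)+1))^3))
        = ((min (k+1) n : ℕ) : ℝ) / ((k:ℝ)+1)^2
          + (6/n) * (((min (k+1) n : ℕ) : ℝ)/((k:ℝ)+1)^3) := by
      rw [htsq k, hcube]
      field_simp
    have step3 : (6/(n:ℝ)) * (((min (k+1) n : ℕ) : ℝ)/((k:ℝ)+1)^3)
        ≤ (6/n) * (1/((k:ℝ)+1)^2) := by
      apply mul_le_mul_of_nonneg_left ?_ (by positivity)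
      rw [div_le_div_iff₀ (by positivity) (by positivity)]
      calc ((min (k+1) n : ℕ) : ℝ) * ((k:ℝ)+1)^2 ≤ ((k:ℝ)+1) * ((k:ℝ)+1)^2 :=
            mul_le_mul_of_nonneg_right (hmin_le k) (by positivity)
        _ = 1 * ((k:ℝ)+1)^3 := by ring
    linarith
  have hMsum := main_sum_split (n := n) (by omega)
  have htail := tail_sq_bounds (n := n) (by omega)
  have hlow : (harmonic (n-1) : ℝ) + 1 ≤ (n:ℝ)^2 * (Real.log (P n (2/n)) - 2 * Real.log (P n x)) := by
    rw [hL, ← tsum_mul_left]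
    have h1 : (∑' k : ℕ, ((min (k+1) n : ℕ) : ℝ) / ((k:ℝ)+1)^2)
        ≤ ∑' k, (n:ℝ)^2 * (((min (k+1) n : ℕ) : ℝ) * hh (x/((k:ℝ)+1))) :=
      Summable.tsum_le_tsum low hs_main (hs_min_hh.mul_left _)
    have h2 : (harmonic (n-1) : ℝ) + 1 ≤ ∑' k : ℕ, ((min (k+1) n : ℕ) : ℝ) / ((k:ℝ)+1)^2 := by
      rw [hMsum]
      have h4 : (1:ℝ) ≤ (n:ℝ) * ∑' j : ℕ, 1/(((j:ℝ)+n)^2) := by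
        calc (1:ℝ) = (n:ℝ) * (1/n) := by field_simp
          _ ≤ (n:ℝ) * ∑' j : ℕ, 1/(((j:ℝ)+n)^2) := mul_le_mul_of_nonneg_left htail.1 hn0.le
      linarith
    exact h2.trans h1
  have hupp : (n:ℝ)^2 * (Real.log (P n (2/n)) - 2 * Real.log (P n x))
      ≤ (harmonic (n-1) : ℝ) + 1 + (1/((n:ℝ)-1) + 12/n) := by
    rw [hL, ← tsum_mul_left]
    have h1 : (∑' k, (n:ℝ)^2 * (((min (k+1) n : ℕ) : ℝ) * hh (x/((k:ℝ)+1))))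
        ≤ ∑' k : ℕ, (((min (k+1) n : ℕ) : ℝ) / ((k:ℝ)+1)^2 + (6/n) * (1/((k:ℝ)+1)^2)) :=
      Summable.tsum_le_tsum upp (hs_min_hh.mul_left _) (hs_main.add (summable_shift_sq.mul_left _))
    rw [Summable.tsum_add hs_main (summable_shift_sq.mul_left _), hMsum,
      tsum_mul_left (f := fun k : ℕ => 1/((k:ℝ)+1)^2)] at h1
    have h2 : (n:ℝ) * ∑' j : ℕ, 1/(((j:ℝ)+n)^2) ≤ 1 + 1/((n:ℝ)-1) := by
      calc (n:ℝ) * ∑' j : ℕ, 1/(((j:ℝ)+n)^2) ≤ (n:ℝ) * (1/((n:ℝ)-1)) :=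
            mul_le_mul_of_nonneg_left htail.2 hn0.le
        _ = 1 + 1/((n:ℝ)-1) := by
            have hn1 : (n:ℝ)-1 ≠ 0 := by linarith
            field_simp
            ring
    have h3 : (6/(n:ℝ)) * ∑' k : ℕ, 1/(((k:ℝ)+1)^2) ≤ 12/n := by
      calc (6/(n:ℝ)) * ∑' k : ℕ, 1/(((k:ℝ)+1)^2) ≤ (6/(n:ℝ)) * 2 :=
            mul_le_mul_of_nonneg_left zeta2_le_two (by positivity)
        _ = 12/n := by ring
    linarith
  constructor <;> linarith


end SCproof

namespace SCproof




noncomputable def aa (n : ℕ) : ℝ := Real.log (P n (1/n))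
noncomputable def LL (n : ℕ) : ℝ := Real.log (P n (2/n)) - 2 * aa n
noncomputable def DD (n : ℕ) : ℝ := ((n:ℝ)^2 - 1) * Real.exp (2 * aa n)
noncomputable def uu (n : ℕ) : ℝ := ((n:ℝ)^2 - 2) * Real.exp (LL n) - ((n:ℝ)^2 - 1)

lemma P_pos {n : ℕ} {x : ℝ} (hx1 : x < 1) : 0 < P n x := by
  apply mul_pos (pow_pos (Real.Gamma_pos_of_pos (by linarith)) n)
  apply Finset.prod_pos
  intro k _
  apply pow_pos
  have : x/((k:ℝ)+1) < 1 := by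
    rw [div_lt_one (by positivity)]
    have h1 : (1:ℝ) ≤ (k:ℝ)+1 := by simp
    linarith
  linarith

lemma kappa_eq {n : ℕ} (hn : 3 ≤ n) :
    (n:ℝ)^2 * (mu0 2 n n - (mu0 1 n n)^2) = DD n * uu n := by
  have hn0 : (0:ℝ) < n := by positivity
  have hn3 : (3:ℝ) ≤ n := by exact_mod_cast hn
  have hx1 : (1:ℝ)/n < 1 := by rw [div_lt_one hn0]; linarith
  have hy1 : (2:ℝ)/n < 1 := by rw [div_lt_one hn0]; linarith
  have hP1 : 0 < P n (1/n) := P_pos hx1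
  have hP2 : 0 < P n (2/n) := P_pos hy1
  have e1 : Real.exp (aa n) = P n (1/n) := Real.exp_log hP1
  have e2 : Real.exp (Real.log (P n (2/n))) = P n (2/n) := Real.exp_log hP2
  rw [mu0_two_eq hn, mu0_one_eq hn]
  unfold DD uu LL
  rw [show 2*aa n = aa n + aa n by ring, Real.exp_add,
    show Real.log (P n (2/n)) - (aa n + aa n) = Real.log (P n (2/n)) - aa n - aa n by ring,
    Real.exp_sub, Real.exp_sub, e1, e2]
  field_simp

lemma tendsto_log_div_nat : Tendsto (fun n : ℕ => Real.log n / n) atTop (𝓝 0) := by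
  have h : Tendsto (fun x : ℝ => Real.log x / x) atTop (𝓝 0) :=
    Asymptotics.IsLittleO.tendsto_div_nhds_zero Real.isLittleO_log_id_atTop
  have h2 : Tendsto (fun n : ℕ => (n:ℝ)) atTop atTop := tendsto_natCast_atTop_atTop
  exact h.comp h2

lemma tendsto_inv_nat : Tendsto (fun n : ℕ => 1/(n:ℝ)) atTop (𝓝 0) :=
  tendsto_one_div_atTop_nhds_zero_nat

lemma tendsto_inv_nat_sub_one : Tendsto (fun n : ℕ => 1/((n:ℝ)-1)) atTop (𝓝 0) := by
  have h := (tendsto_one_div_atTop_nhds_zero_nat : Tendsto (fun n : ℕ => 1/(n:ℝ)) atTop (𝓝 0)).comp (tendsto_sub_atTop_nat 1)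
  apply h.congr'
  filter_upwards [eventually_ge_atTop 2] with n hn
  simp only [Function.comp_apply]
  congr 1
  rw [Nat.cast_sub (by omega)]
  push_cast; ring

lemma cast_sub_one_add_one {n : ℕ} (hn : 1 ≤ n) : ((n-1:ℕ):ℝ) + 1 = n := by
  rw [Nat.cast_sub hn]; push_cast; ring

lemma hgam : Tendsto (fun n : ℕ => (harmonic (n-1) : ℝ) - Real.log n) atTop
    (𝓝 Real.eulerMascheroniConstant) := by
  have h := Real.tendsto_eulerMascheroniSeq.comp (tendsto_sub_atTop_nat 1)
  apply h.congr'
  filter_upwards [eventually_ge_atTop 1] with n hn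
  simp only [Function.comp_apply, Real.eulerMascheroniSeq]
  rw [cast_sub_one_add_one hn]

lemma harmonic_le {n : ℕ} (hn : 1 ≤ n) : (harmonic n : ℝ) ≤ Real.log n + 1 := by
  have h := Real.strictAnti_eulerMascheroniSeq'.antitone hn
  rw [Real.eulerMascheroniSeq'_one] at h
  simp only [Real.eulerMascheroniSeq', if_neg (by omega : n ≠ 0)] at h
  linarith

lemma gamma_window {n : ℕ} (hn : 3 ≤ n) :
    0 ≤ Real.eulerMascheroniConstant - ((harmonic (n-1) : ℝ) - Real.log n) ∧
      Real.eulerMascheroniConstant - ((harmonic (n-1) : ℝ) - Real.log n) ≤ 2/n := by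
  have hn0 : (0:ℝ) < n := by positivity
  have hn3 : (3:ℝ) ≤ n := by exact_mod_cast hn
  constructor
  · have h := Real.eulerMascheroniSeq_lt_eulerMascheroniConstant (n-1)
    simp only [Real.eulerMascheroniSeq] at h
    rw [cast_sub_one_add_one (by omega)] at h
    linarith
  · have h := Real.eulerMascheroniConstant_lt_eulerMascheroniSeq' (n-1)
    simp only [Real.eulerMascheroniSeq', if_neg (by omega : n-1 ≠ 0)] at h
    have hcast : ((n-1:ℕ):ℝ) = (n:ℝ) - 1 := by
      rw [Nat.cast_sub (by omega)]; push_cast; ring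
    rw [hcast] at h
    -- h : γ < harmonic (n-1) - log (n-1)
    have hlog : Real.log ((n:ℝ)-1) = Real.log n + Real.log (1 - 1/n) := by
      rw [← Real.log_mul hn0.ne' (by
        have : (1:ℝ)/n < 1 := by rw [div_lt_one hn0]; linarith
        intro hc; nlinarith [hc])]
      congr 1
      field_simp
    have hbound : -Real.log (1 - 1/n) ≤ 2/n := by
      have h1 : (0:ℝ) ≤ 1/n := by positivity
      have h2 : (1:ℝ)/n < 1 := by rw [div_lt_one hn0]; linarith
      have := neg_log_one_sub_le h1 h2
      calc -Real.log (1 - 1/n) ≤ (1/n)/(1-1/n) := this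
        _ ≤ 2/n := by
            rw [div_le_div_iff₀ (by linarith) hn0]
            have e1 : (1:ℝ)/n*n = 1 := by field_simp
            have e2 : (1:ℝ)/n ≤ 1/3 := by
              rw [div_le_div_iff₀ hn0 (by norm_num)]; linarith
            linarith
    rw [hlog] at h
    linarith

lemma exp_near {v : ℝ} (hv : |v| ≤ 1) : |Real.exp v - 1| ≤ 2 * |v| := by
  have h := Real.abs_exp_sub_one_sub_id_le hv
  have h2 : |Real.exp v - 1| ≤ |Real.exp v - 1 - v| + |v| := by
    calc |Real.exp v - 1| = |(Real.exp v - 1 - v) + v| := by ring_nf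
      _ ≤ |Real.exp v - 1 - v| + |v| := abs_add_le _ _
  have h3 : v^2 ≤ |v| := by
    rw [← sq_abs]
    nlinarith [abs_nonneg v]
  linarith

end SCproof

namespace Stage2
open SCproof

lemma ML_bounds {n : ℕ} (hn : 3 ≤ n) :
    (harmonic (n-1) : ℝ) + 1 ≤ (n:ℝ)^2 * LL n ∧
      (n:ℝ)^2 * LL n ≤ Real.log n + 7 := by
  have hn0 : (0:ℝ) < n := by positivity
  have hn3 : (3:ℝ) ≤ n := by exact_mod_cast hn
  have h := L_expand hn
  have hL : (n:ℝ)^2 * LL n = (n:ℝ)^2 * (Real.log (P n (2/n)) - 2 * Real.log (P n (1/n))) := by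
    unfold LL aa; ring
  constructor
  · rw [hL]; linarith [h.1]
  · rw [hL]
    have hharm : (harmonic (n-1) : ℝ) ≤ Real.log n + 1 := by
      calc (harmonic (n-1) : ℝ) ≤ Real.log (n-1:ℕ) + 1 := harmonic_le (by omega)
        _ ≤ Real.log n + 1 := by
            have : ((n-1:ℕ):ℝ) ≤ (n:ℝ) := by
              rw [Nat.cast_sub (by omega)]; push_cast; linarith
            have := Real.log_le_log (by
              rw [Nat.cast_sub (by omega)]; push_cast; linarith) this
            linarith
    have h1 : 1/((n:ℝ)-1) ≤ 1 := by
      rw [div_le_one (by linarith)]; linarith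
    have h2 : 12/(n:ℝ) ≤ 4 := by
      rw [div_le_iff₀ hn0]; linarith
    linarith [h.2]

lemma LL_nonneg {n : ℕ} (hn : 3 ≤ n) : 0 ≤ LL n := by
  have hn0 : (0:ℝ) < n := by positivity
  have h := (ML_bounds hn).1
  have hharm : (0:ℝ) ≤ (harmonic (n-1) : ℝ) := by
    have := harmonic_pos (n := n-1) (by omega)
    exact_mod_cast this.le
  nlinarith

lemma LL_le {n : ℕ} (hn : 3 ≤ n) : LL n ≤ (Real.log n + 7)/(n:ℝ)^2 := by
  have hn0 : (0:ℝ) < n := by positivity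
  have h := (ML_bounds hn).2
  rw [le_div_iff₀ (by positivity)]
  linarith [h]

lemma LL_le_one {n : ℕ} (hn : 3 ≤ n) : LL n ≤ 1 := by
  have hn0 : (0:ℝ) < n := by positivity
  have hn3 : (3:ℝ) ≤ n := by exact_mod_cast hn
  have h := LL_le hn
  have hlog : Real.log n ≤ (n:ℝ) - 1 := by
    have := Real.log_le_sub_one_of_pos hn0
    linarith
  calc LL n ≤ (Real.log n + 7)/(n:ℝ)^2 := h
    _ ≤ 1 := by
        rw [div_le_one (by positivity)]
        nlinarith

lemma tendsto_LL : Tendsto (fun n : ℕ => LL n) atTop (𝓝 0) := by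
  apply squeeze_zero' (g := fun n : ℕ => (Real.log n + 7)/(n:ℝ)^2)
  · filter_upwards [eventually_ge_atTop 3] with n hn
    exact LL_nonneg hn
  · filter_upwards [eventually_ge_atTop 3] with n hn
    exact LL_le hn
  · have h1 : Tendsto (fun n : ℕ => Real.log n/(n:ℝ)^2 + 7/(n:ℝ)^2) atTop (𝓝 0) := by
      have a1 : Tendsto (fun n : ℕ => Real.log n/(n:ℝ)^2) atTop (𝓝 0) := by
        apply squeeze_zero' (g := fun n : ℕ => Real.log n/(n:ℝ))
        · filter_upwards [eventually_ge_atTop 1] with n hn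
          have : (0:ℝ) < n := by exact_mod_cast hn
          positivity
        · filter_upwards [eventually_ge_atTop 1] with n hn
          have h1 : (1:ℝ) ≤ n := by exact_mod_cast hn
          apply div_le_div_of_nonneg_left ?_ (by positivity) ?_
          · exact Real.log_nonneg h1
          · nlinarith
        · exact tendsto_log_div_nat
      have a2 : Tendsto (fun n : ℕ => 7/(n:ℝ)^2) atTop (𝓝 0) := by
        apply squeeze_zero' (g := fun n : ℕ => 7/(n:ℝ))
        · filter_upwards [eventually_ge_atTop 1] with n hn
          have : (0:ℝ) < n := by exact_mod_cast hn
          positivity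
        · filter_upwards [eventually_ge_atTop 1] with n hn
          have h1 : (1:ℝ) ≤ n := by exact_mod_cast hn
          apply div_le_div_of_nonneg_left (by norm_num) (by positivity) (by nlinarith)
        · simpa [div_eq_mul_inv] using tendsto_inv_nat.const_mul 7
      simpa using a1.add a2
    apply h1.congr
    intro n
    ring

lemma tendsto_uu : Tendsto (fun n : ℕ => uu n
    - (Real.eulerMascheroniConstant + Real.log n)) atTop (𝓝 0) := by
  have tA1 : Tendsto (fun n : ℕ => (n:ℝ)^2 * LL n - ((harmonic (n-1) : ℝ) + 1)) atTop (𝓝 0) := by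
    apply squeeze_zero' (g := fun n : ℕ => 1/((n:ℝ)-1) + 12/n)
    · filter_upwards [eventually_ge_atTop 3] with n hn
      linarith [(ML_bounds hn).1]
    · filter_upwards [eventually_ge_atTop 3] with n hn
      have h := L_expand hn
      have hL : (n:ℝ)^2 * LL n = (n:ℝ)^2 * (Real.log (P n (2/n)) - 2 * Real.log (P n (1/n))) := by
        unfold LL aa; ring
      rw [hL]; linarith [h.2]
    · simpa using tendsto_inv_nat_sub_one.add (tendsto_inv_nat.const_mul 12 |>.congr
        (fun n => by rw [mul_one_div]))
  have hfn : Tendsto (fun n : ℕ => (Real.log n + 7)/(n:ℝ)) atTop (𝓝 0) := by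
    have := tendsto_log_div_nat.add (tendsto_inv_nat.const_mul 7 |>.congr
      (fun n => by rw [mul_one_div]))
    norm_num at this
    apply this.congr
    intro n
    ring
  have tA2 : Tendsto (fun n : ℕ => (n:ℝ)^2 * (Real.exp (LL n) - 1 - LL n)) atTop (𝓝 0) := by
    apply squeeze_zero_norm' (a := fun n : ℕ => ((Real.log n + 7)/(n:ℝ))^2)
    · filter_upwards [eventually_ge_atTop 3] with n hn
      have hn0 : (0:ℝ) < n := by positivity
      have h0 := LL_nonneg hn
      have h1 := LL_le_one hn
      have h2 := LL_le hn
      have habs : |LL n| ≤ 1 := abs_le.mpr ⟨by linarith, h1⟩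
      have hexp := Real.abs_exp_sub_one_sub_id_le habs
      rw [Real.norm_eq_abs, abs_mul, abs_of_nonneg (by positivity : (0:ℝ) ≤ (n:ℝ)^2)]
      calc (n:ℝ)^2 * |Real.exp (LL n) - 1 - LL n| ≤ (n:ℝ)^2 * (LL n)^2 :=
            mul_le_mul_of_nonneg_left hexp (by positivity)
        _ ≤ (n:ℝ)^2 * ((Real.log n + 7)/(n:ℝ)^2)^2 := by
            apply mul_le_mul_of_nonneg_left ?_ (by positivity)
            apply pow_le_pow_left₀ h0 h2
        _ = ((Real.log n + 7)/(n:ℝ))^2 := by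
            field_simp
    · have h := hfn.mul hfn
      norm_num at h
      apply h.congr
      intro n
      rw [sq]
  have tA3 : Tendsto (fun n : ℕ => ((harmonic (n-1) : ℝ) - Real.log n)
      - Real.eulerMascheroniConstant) atTop (𝓝 0) := by
    simpa using hgam.sub_const Real.eulerMascheroniConstant
  have texp : Tendsto (fun n : ℕ => Real.exp (LL n)) atTop (𝓝 1) := by
    have := (Real.continuous_exp.continuousAt (x := (0:ℝ))).tendsto.comp tendsto_LL
    simpa [Function.comp_def] using this
  have tA4 : Tendsto (fun n : ℕ => 2 - 2 * Real.exp (LL n)) atTop (𝓝 0) := by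
    have := (texp.const_mul 2).const_sub 2
    simpa using this
  have hsum := ((tA1.add tA2).add tA3).add tA4
  simp only [add_zero] at hsum
  apply hsum.congr
  intro n
  unfold uu
  ring

lemma DD_bound {n : ℕ} (hn : 13 ≤ n) : |DD n - Real.exp 2| ≤ Real.exp 2 * (26/n) := by
  have hn3 : 3 ≤ n := by omega
  have hn0 : (0:ℝ) < n := by positivity
  have hnn : (13:ℝ) ≤ n := by exact_mod_cast hn
  obtain ⟨Δ, hΔ0, hΔ3, haa⟩ := a_expand hn3
  have hn2pos : (0:ℝ) < (n:ℝ)^2 - 1 := by nlinarith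
  set vv : ℝ := Real.log ((n:ℝ)^2 - 1) + 2 * aa n - 2 with hvv
  have hDD : DD n = Real.exp 2 * Real.exp vv := by
    rw [DD, ← Real.exp_log hn2pos, ← Real.exp_add, ← Real.exp_add]
    congr 1
    rw [hvv]; ring
  -- bound on vv
  have hE1 : Real.log ((n:ℝ)^2 - 1) - 2 * Real.log n = Real.log (1 - 1/(n:ℝ)^2) := by
    have h2 : (0:ℝ) < 1 - 1/(n:ℝ)^2 := by
      have : 1/(n:ℝ)^2 ≤ 1/9 := by
        rw [div_le_div_iff₀ (by positivity) (by norm_num)]; nlinarith [sq_nonneg ((n:ℝ)-3)]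
      linarith
    have hsplit : (n:ℝ)^2 - 1 = (n:ℝ)^2 * (1 - 1/(n:ℝ)^2) := by
      field_simp
    rw [hsplit, Real.log_mul (by positivity) h2.ne', Real.log_pow]
    push_cast
    ring
  have hE1b : -(2/(n:ℝ)^2) ≤ Real.log (1 - 1/(n:ℝ)^2) ∧ Real.log (1 - 1/(n:ℝ)^2) ≤ 0 := by
    have ht0 : (0:ℝ) ≤ 1/(n:ℝ)^2 := by positivity
    have ht1 : 1/(n:ℝ)^2 ≤ 1/2 := by
      rw [div_le_div_iff₀ (by positivity) (by norm_num)]; nlinarith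
    constructor
    · have := neg_log_one_sub_le ht0 (by linarith)
      have h2 : (1/(n:ℝ)^2)/(1 - 1/(n:ℝ)^2) ≤ 2/(n:ℝ)^2 := by
        rw [div_le_div_iff₀ (by linarith) (by positivity)]
        have e1 : 1/(n:ℝ)^2*(n:ℝ)^2 = 1 := by field_simp
        linarith
      linarith
    · apply Real.log_nonpos (by linarith) (by linarith)
  have hw := gamma_window hn3
  have hvvb : |vv| ≤ 13/n := by
    have hvv2 : vv = (Real.log ((n:ℝ)^2 - 1) - 2 * Real.log n)
        + 2 * (Real.eulerMascheroniConstant - ((harmonic (n-1) : ℝ) - Real.log n))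
        - 2/n + 2*Δ := by
      rw [hvv]
      unfold aa
      rw [haa]
      ring
    rw [hvv2, hE1]
    have h2n : 2/(n:ℝ)^2 ≤ 1/n := by
      rw [div_le_div_iff₀ (by positivity) hn0]; nlinarith
    rw [abs_le]
    have hinv : (0:ℝ) ≤ 1/(n:ℝ) := by positivity
    have hw2 : 2 * (Real.eulerMascheroniConstant - ((harmonic (n-1) : ℝ) - Real.log n)) ≤ 2*(2/n) :=
      by linarith [hw.2]
    have hw1 : 0 ≤ 2 * (Real.eulerMascheroniConstant - ((harmonic (n-1) : ℝ) - Real.log n)) :=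
      by linarith [hw.1]
    have hd2 : 2*Δ ≤ 2*(3/n) := by linarith [hΔ3]
    have e4 : 2*((2:ℝ)/n) = 4*(1/n) := by ring
    have e6 : 2*((3:ℝ)/n) = 6*(1/n) := by ring
    have e13 : (13:ℝ)/n = 13*(1/n) := by ring
    have e2n : (2:ℝ)/n = 2*(1/n) := by ring
    constructor
    · linarith [hE1b.1, h2n]
    · linarith [hE1b.2]
  have hvv1 : |vv| ≤ 1 := by
    have : (13:ℝ)/n ≤ 1 := by rw [div_le_one hn0]; linarith
    linarith
  rw [hDD]
  have : Real.exp 2 * Real.exp vv - Real.exp 2 = Real.exp 2 * (Real.exp vv - 1) := by ring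
  rw [this, abs_mul, abs_of_pos (Real.exp_pos 2)]
  apply mul_le_mul_of_nonneg_left ?_ (Real.exp_pos 2).le
  calc |Real.exp vv - 1| ≤ 2 * |vv| := exp_near hvv1
    _ ≤ 2 * (13/n) := by linarith [hvvb]
    _ = 26/n := by ring

lemma tendsto_DD0 : Tendsto (fun n : ℕ => DD n - Real.exp 2) atTop (𝓝 0) := by
  apply squeeze_zero_norm' (a := fun n : ℕ => Real.exp 2 * (26/n))
  · filter_upwards [eventually_ge_atTop 13] with n hn
    exact DD_bound hn
  · have := tendsto_inv_nat.const_mul (Real.exp 2 * 26)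
    simp only [mul_zero] at this
    apply this.congr
    intro n
    rw [mul_one_div]
    ring
  -- done

lemma tendsto_DDlog : Tendsto (fun n : ℕ =>
    (Real.eulerMascheroniConstant + Real.log n) * (DD n - Real.exp 2)) atTop (𝓝 0) := by
  apply squeeze_zero_norm' (a := fun n : ℕ =>
    Real.exp 2 * 26 * (|Real.eulerMascheroniConstant| * (1/n) + Real.log n / n))
  · filter_upwards [eventually_ge_atTop 13] with n hn
    have hn0 : (0:ℝ) < n := by positivity
    have hn1 : (1:ℝ) ≤ n := by exact_mod_cast (by omega : 1 ≤ n)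
    have hlog : (0:ℝ) ≤ Real.log n := Real.log_nonneg hn1
    rw [Real.norm_eq_abs, abs_mul]
    have h1 : |Real.eulerMascheroniConstant + Real.log n|
        ≤ |Real.eulerMascheroniConstant| + Real.log n := by
      calc |Real.eulerMascheroniConstant + Real.log n|
          ≤ |Real.eulerMascheroniConstant| + |Real.log n| := abs_add_le _ _
        _ = |Real.eulerMascheroniConstant| + Real.log n := by rw [abs_of_nonneg hlog]
    calc |Real.eulerMascheroniConstant + Real.log n| * |DD n - Real.exp 2|
        ≤ (|Real.eulerMascheroniConstant| + Real.log n) * (Real.exp 2 * (26/n)) := by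
          apply mul_le_mul h1 (DD_bound hn) (abs_nonneg _) ?_
          positivity
      _ = Real.exp 2 * 26 * (|Real.eulerMascheroniConstant| * (1/n) + Real.log n / n) := by
          field_simp
  · have h1 := (tendsto_inv_nat.const_mul |Real.eulerMascheroniConstant|).add tendsto_log_div_nat
    simp only [mul_zero, add_zero] at h1
    have := h1.const_mul (Real.exp 2 * 26)
    simpa using this

theorem second_cumulant_square_case' :
    Tendsto
      (fun n : ℕ => (n : ℝ) ^ 2 * (mu0 2 n n - (mu0 1 n n) ^ 2)
        - Real.exp 1 ^ 2 * (Real.eulerMascheroniConstant + Real.log n))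
      atTop (𝓝 0) := by
  have hE : Real.exp 1 ^ 2 = Real.exp 2 := by
    rw [← Real.exp_nat_mul]; norm_num
  have key : Tendsto (fun n : ℕ => DD n * uu n
      - Real.exp 2 * (Real.eulerMascheroniConstant + Real.log n)) atTop (𝓝 0) := by
    have h := ((tendsto_DD0.mul tendsto_uu).add tendsto_DDlog).add
      (tendsto_uu.const_mul (Real.exp 2))
    simp only [mul_zero, zero_mul, add_zero, zero_add] at h
    apply h.congr
    intro n
    ring
  apply key.congr'
  filter_upwards [eventually_ge_atTop 3] with n hn
  rw [← kappa_eq hn, hE]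

end Stage2

/-- for the square case `m = n` (`c = 1`), the second cumulant
`κ2(n) = μ0(2,n,n) − μ0(1,n,n)²` satisfies `n²·κ2(n) − e²(γ + ln n) → 0` as `n → ∞`. -/
theorem second_cumulant_square_case :
    Tendsto
      (fun n : ℕ => (n : ℝ) ^ 2 * (mu0 2 n n - (mu0 1 n n) ^ 2)
        - Real.exp 1 ^ 2 * (Real.eulerMascheroniConstant + Real.log n))
      atTop (𝓝 0) := by
  have h := Stage2.second_cumulant_square_case'
  exact h
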